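/- Let K ⊂ ℝⁿ be a closed cone invariant under a semigroup S_hom of linear maps, and suppose Cu + d ∈ K for all u ∈ Ω. If K is also convex (so K + K ⊂ K), then K is positively invariant for the affine control system ẋ = A(u)x + Cu + d with piecewise constant controls: for piecewise constant u and x ∈ K the solution satisfies φ(t, x, u) ∈ K for all t ≥ 0. -/

import Mathlib

open NormedSpace MeasureTheory intervalIntegral

section helpers

variable {n : ℕ}

/-- variation-of-constants representation on an interval with constant data -/
lemma voc_rep (M : Matrix (Fin n) (Fin n) ℝ) (b : Fin n → ℝ)
    (φ : ℝ → Fin n → ℝ) (t0 δ : ℝ) (hδ : 0 ≤ δ)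
    (h : ∀ s ∈ Set.Icc (0:ℝ) δ, HasDerivAt φ (M.mulVec (φ (t0 + s)) + b) (t0 + s)) :
    φ (t0 + δ) = (exp (δ • M)).mulVec (φ t0)
      + ∫ s in (0:ℝ)..δ, (exp ((δ - s) • M)).mulVec b := by
  letI : SeminormedRing (Matrix (Fin n) (Fin n) ℝ) := Matrix.linftyOpSemiNormedRing
  letI : NormedRing (Matrix (Fin n) (Fin n) ℝ) := Matrix.linftyOpNormedRing
  letI : NormedAlgebra ℝ (Matrix (Fin n) (Fin n) ℝ) := Matrix.linftyOpNormedAlgebra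
  -- the continuous linear map sending a matrix to its `mulVec` operator
  let Llin : Matrix (Fin n) (Fin n) ℝ →ₗ[ℝ] ((Fin n → ℝ) →L[ℝ] (Fin n → ℝ)) :=
    { toFun := fun N => LinearMap.toContinuousLinearMap (Matrix.mulVecLin N)
      map_add' := fun N N' => by ext v i; simp [Matrix.add_mulVec]
      map_smul' := fun r N => by ext v i; simp [Matrix.smul_mulVec] }
  let L := LinearMap.toContinuousLinearMap Llin
  have hL : ∀ (N : Matrix (Fin n) (Fin n) ℝ) v, L N v = N.mulVec v := fun N v => rfl
  set E : ℝ → Matrix (Fin n) (Fin n) ℝ := fun s => exp (s • (-M)) with hEdef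
  have hE : ∀ s : ℝ, HasDerivAt E (E s * (-M)) s := fun s =>
    hasDerivAt_exp_smul_const (-M) s
  have cE : Continuous E := by
    rw [continuous_iff_continuousAt]; exact fun s => (hE s).continuousAt
  set g : ℝ → Fin n → ℝ := fun s => (E s).mulVec (φ (t0 + s)) with hgdef
  set g' : ℝ → Fin n → ℝ := fun s => (E s).mulVec b with hg'def
  have hg : ∀ s ∈ Set.uIcc (0:ℝ) δ, HasDerivAt g (g' s) s := by
    intro s hs
    rw [Set.uIcc_of_le hδ] at hs
    have h1 : HasDerivAt (fun r => L (E r)) (L (E s * -M)) s :=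
      (L.hasFDerivAt).comp_hasDerivAt s (hE s)
    have h2 : HasDerivAt (fun r => φ (t0 + r)) (M.mulVec (φ (t0 + s)) + b) s :=
      (h s hs).comp_const_add t0 s
    have h3 := h1.clm_apply h2
    refine h3.congr_deriv (Eq.symm ?_)
    show (E s).mulVec b = (E s * -M).mulVec (φ (t0 + s)) + (E s).mulVec (M.mulVec (φ (t0 + s)) + b)
    rw [Matrix.mulVec_add, mul_neg, Matrix.neg_mulVec, Matrix.mulVec_mulVec]
    abel
  have hcont : Continuous g' := by
    have : Continuous fun s => L (E s) := L.continuous.comp cE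
    simpa [hg'def, ← hL] using this.clm_apply continuous_const
  have hint : IntervalIntegrable g' volume 0 δ := hcont.intervalIntegrable _ _
  have key := intervalIntegral.integral_eq_sub_of_hasDerivAt hg hint
  have hg0 : g 0 = φ t0 := by simp [hgdef, hEdef, exp_zero]
  have hinv : exp (δ • M) * E δ = 1 := by
    rw [hEdef, ← Matrix.exp_add_of_commute _ _
      (((Commute.refl M).neg_right.smul_left δ).smul_right δ)]
    simp [smul_neg]
  have hφδ : φ (t0 + δ) = (exp (δ • M)).mulVec (g δ) := by
    rw [hgdef]
    simp only [Matrix.mulVec_mulVec, hinv, Matrix.one_mulVec]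
  have hgδ : g δ = φ t0 + ∫ s in (0:ℝ)..δ, g' s := by
    rw [← hg0]; rw [key]; abel
  have hpull : (exp (δ • M)).mulVec (∫ s in (0:ℝ)..δ, g' s)
      = ∫ s in (0:ℝ)..δ, (exp ((δ - s) • M)).mulVec b := by
    rw [← hL, ← (L (exp (δ • M))).intervalIntegral_comp_comm hint]
    refine intervalIntegral.integral_congr fun s hs => ?_
    rw [hL]
    show (exp (δ • M)).mulVec ((E s).mulVec b) = _
    rw [Matrix.mulVec_mulVec, hEdef, ← Matrix.exp_add_of_commute _ _
      (((Commute.refl M).neg_right.smul_left δ).smul_right s), smul_neg,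
      ← sub_eq_add_neg, ← sub_smul]
  rw [hφδ, hgδ, Matrix.mulVec_add, hpull]


lemma cont_exp_mulVec (M : Matrix (Fin n) (Fin n) ℝ) (b : Fin n → ℝ) (δ : ℝ) :
    Continuous fun s : ℝ => (exp ((δ - s) • M)).mulVec b := by
  letI : SeminormedRing (Matrix (Fin n) (Fin n) ℝ) := Matrix.linftyOpSemiNormedRing
  letI : NormedRing (Matrix (Fin n) (Fin n) ℝ) := Matrix.linftyOpNormedRing
  letI : NormedAlgebra ℝ (Matrix (Fin n) (Fin n) ℝ) := Matrix.linftyOpNormedAlgebra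
  letI : NormedAlgebra ℚ (Matrix (Fin n) (Fin n) ℝ) := NormedAlgebra.restrictScalars ℚ ℝ _
  have : Continuous fun s : ℝ => exp ((δ - s) • M) :=
    exp_continuous.comp (((continuous_const.sub continuous_id).smul continuous_const))
  refine continuous_pi fun i => ?_
  simp only [Matrix.mulVec, dotProduct]
  exact continuous_finset_sum _ fun j _ =>
    ((continuous_apply j).comp ((continuous_apply i).comp this)).mul continuous_const

lemma integral_mem_cone (K : Set (Fin n → ℝ)) (hclosed : IsClosed K)
    (hconvex : Convex ℝ K) (hcone : ∀ w ∈ K, ∀ l : ℝ, 0 < l → l • w ∈ K)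
    (f : ℝ → Fin n → ℝ) (hf : Continuous f) {δ : ℝ} (hδ : 0 < δ)
    (hmem : ∀ s ∈ Set.Icc (0:ℝ) δ, f s ∈ K) :
    (∫ s in (0:ℝ)..δ, f s) ∈ K := by
  rw [intervalIntegral.integral_of_le hδ.le]
  set μ := volume.restrict (Set.Ioc (0:ℝ) δ) with hμ
  have hμuniv : μ Set.univ = ENNReal.ofReal δ := by
    rw [hμ, Measure.restrict_apply_univ, Real.volume_Ioc, sub_zero]
  haveI : IsFiniteMeasure μ := ⟨by rw [hμuniv]; exact ENNReal.ofReal_lt_top⟩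
  haveI : NeZero μ := ⟨by
    intro h
    have := hμuniv
    rw [h] at this
    simp only [Measure.coe_zero, Pi.zero_apply] at this
    exact absurd this.symm (by simpa using hδ)⟩
  have hae : ∀ᵐ s ∂μ, f s ∈ K :=
    (ae_restrict_iff' measurableSet_Ioc).2
      (Filter.Eventually.of_forall fun s hs => hmem s ⟨hs.1.le, hs.2⟩)
  have hint : Integrable f μ := hf.integrableOn_Ioc
  have havg := hconvex.average_mem hclosed hae hint
  have heq : (∫ s in Set.Ioc (0:ℝ) δ, f s) = δ • ⨍ s, f s ∂μ := by
    rw [average_eq, smul_smul, measureReal_def, hμuniv, ENNReal.toReal_ofReal hδ.le,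
      mul_inv_cancel₀ hδ.ne', one_smul]
  rw [heq]
  exact hcone _ havg δ hδ

end helpers

open Finset in
/-- A closed convex cone `K` which is invariant under the linear semigroup
`e^{tA(u)}`, `u ∈ Ω`, `t ≥ 0`, and with `Cu + d ∈ K` for all `u ∈ Ω`, is positively
invariant for the affine control system with piecewise constant controls. -/
theorem convex_cone_positively_invariant {n m : ℕ}
    (A : Matrix (Fin n) (Fin n) ℝ) (B : Fin m → Matrix (Fin n) (Fin n) ℝ)
    (c : Fin m → Fin n → ℝ) (d : Fin n → ℝ) (Ω : Set (Fin m → ℝ))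
    (K : Set (Fin n → ℝ)) (hclosed : IsClosed K) (hconvex : Convex ℝ K)
    (hcone : ∀ w ∈ K, ∀ l : ℝ, 0 < l → l • w ∈ K)
    (hinvK : ∀ w ∈ Ω, ∀ t : ℝ, 0 ≤ t → ∀ x ∈ K,
      (NormedSpace.exp (t • (A + ∑ i, w i • B i))).mulVec x ∈ K)
    (haff : ∀ w ∈ Ω, ((∑ i, w i • c i) + d) ∈ K)
    (u : ℝ → Fin m → ℝ) (hu : ∀ t, u t ∈ Ω)
    (hpc : ∀ t ≥ (0 : ℝ), ∃ ε > 0, ∀ s ∈ Set.Ico t (t + ε), u s = u t)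
    (x : Fin n → ℝ) (hx : x ∈ K) (φ : ℝ → Fin n → ℝ) (h0 : φ 0 = x)
    (hφ : ∀ t, HasDerivAt φ ((A + ∑ i, u t i • B i).mulVec (φ t)
      + (∑ i, u t i • c i) + d) t) :
    ∀ t ≥ (0 : ℝ), φ t ∈ K := by
  intro T hT
  have hcontφ : Continuous φ := continuous_iff_continuousAt.2 fun t => (hφ t).continuousAt
  have hsum : ∀ w1 ∈ K, ∀ w2 ∈ K, w1 + w2 ∈ K := by
    intro w1 h1 w2 h2
    have hmid := hconvex h1 h2 (by norm_num : (0:ℝ) ≤ 1/2) (by norm_num : (0:ℝ) ≤ 1/2)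
      (by norm_num)
    have := hcone _ hmid 2 two_pos
    rw [smul_add, smul_smul, smul_smul] at this
    norm_num at this
    exact this
  set S : Set ℝ := {t | φ t ∈ K} with hS
  have key : Set.Icc (0:ℝ) T ⊆ S := by
    refine IsClosed.Icc_subset_of_forall_exists_gt
      ((hclosed.preimage hcontφ).inter isClosed_Icc) (by simp [hS, h0, hx]) ?_
    rintro t ⟨htK, ht0, htT⟩ y hy
    obtain ⟨ε, hε, hconst⟩ := hpc t ht0
    set z := min (t + ε / 2) y with hz
    have hzt : t < z := lt_min (by linarith) hy
    set δ := z - t with hδdef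
    have hδ0 : 0 < δ := by rw [hδdef]; linarith
    have hδε : δ < ε := by
      have : z ≤ t + ε / 2 := min_le_left _ _
      simp only [hδdef]; linarith
    set M := A + ∑ i, u t i • B i with hM
    set b := (∑ i, u t i • c i) + d with hb
    have hbK : b ∈ K := haff (u t) (hu t)
    have hder : ∀ s ∈ Set.Icc (0:ℝ) δ, HasDerivAt φ (M.mulVec (φ (t + s)) + b) (t + s) := by
      intro s hs
      have hus : u (t + s) = u t := hconst _ ⟨by linarith [hs.1], by
        have := hs.2; linarith⟩
      have := hφ (t + s)
      rw [hus] at this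
      simpa [hM, hb, add_assoc] using this
    have hrep := voc_rep M b φ t δ hδ0.le hder
    have hmem1 : (NormedSpace.exp (δ • M)).mulVec (φ t) ∈ K :=
      hinvK (u t) (hu t) δ hδ0.le (φ t) htK
    have hmem2 : (∫ s in (0:ℝ)..δ, (NormedSpace.exp ((δ - s) • M)).mulVec b) ∈ K := by
      refine integral_mem_cone K hclosed hconvex hcone _ (cont_exp_mulVec M b δ) hδ0 ?_
      intro s hs
      exact hinvK (u t) (hu t) (δ - s) (by linarith [hs.2]) b hbK
    have hzK : φ z ∈ K := by
      have : t + δ = z := by simp [hδdef]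
      rw [← this]
      rw [hrep]
      exact hsum _ hmem1 _ hmem2
    exact ⟨z, hzK, hzt, min_le_right _ _⟩
  exact key ⟨hT, le_refl T⟩
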